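/- For every procedure with safe scope P (with tgd postconditions Σ) and every pair of instances I* ⊆ I over the same schema: every instance in outcomes_P(I) extends some minimal instance of outcomes_P(I*), provided every assignment satisfying a left-hand side of a tgd of Σ in I* also does so in I (which holds since I* ⊆ I). -/

import Mathlib

/-- Domain of values. -/
abbrev Val := ℕ
/-- Variables. -/
abbrev Var := ℕ
/-- Relation names. -/
abbrev RelName := ℕ
/-- A relational instance assigns a set of tuples to each relation name. -/
abbrev Instance := RelName → Set (List Val)

/-- Instance extension (inclusion). -/
def Instance.le (I J : Instance) : Prop := ∀ R, I R ⊆ J R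

/-- A relational atom `R(x₁,…,xₖ)`. -/
structure Atom where
  rel : RelName
  args : List Var

/-- Satisfaction of an atom under an assignment. -/
def holdsAtom (I : Instance) (ν : Var → Val) (a : Atom) : Prop :=
  a.args.map ν ∈ I a.rel

/-- A tuple-generating dependency, given by its body and head conjunctions. -/
structure TGD where
  body : List Atom
  head : List Atom

/-- Variables occurring in the body of a tgd. -/
def TGD.bodyVar (t : TGD) (v : Var) : Prop := ∃ a ∈ t.body, v ∈ a.args

/-- Satisfaction of a tgd: every assignment satisfying the body extends to one
satisfying the head. -/
def satTGD (I : Instance) (t : TGD) : Prop :=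
  ∀ ν : Var → Val, (∀ a ∈ t.body, holdsAtom I ν a) →
    ∃ ν' : Var → Val, (∀ v, t.bodyVar v → ν' v = ν v) ∧ ∀ a ∈ t.head, holdsAtom I ν' a

/-- A full tgd has no existential variables in its head. -/
def FullTGD (t : TGD) : Prop := ∀ a ∈ t.head, ∀ v ∈ a.args, t.bodyVar v

/-- A set of tgds is acyclic: the relation-dependency graph (edge from a body
relation to a head relation) has no cycle, witnessed by a rank function. -/
def AcyclicTGDs (ts : List TGD) : Prop :=
  ∃ rank : RelName → ℕ, ∀ t ∈ ts, ∀ a ∈ t.body, ∀ b ∈ t.head, rank a.rel < rank b.rel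

/-- Finiteness of an instance (finitely many facts overall). -/
def FiniteInst (I : Instance) : Prop := {p : RelName × List Val | p.2 ∈ I p.1}.Finite

/-- Relations appearing in heads of a set of tgds (the scope of a safe-scope procedure). -/
def headRels (ts : List TGD) : Set RelName := { R | ∃ t ∈ ts, ∃ b ∈ t.head, b.rel = R }

/-- Outcomes of applying a procedure with safe scope (identified with its set of
postcondition tgds): extensions of `I` satisfying the tgds, where all relations
outside the scope (the head relations) are unchanged. -/
def safeOutcomes (ts : List TGD) (I : Instance) : Set Instance :=
  { J | Instance.le I J ∧ (∀ t ∈ ts, satTGD J t) ∧ ∀ R, R ∉ headRels ts → I R = J R }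

/-- Outcomes of a sequence of procedures with safe scope. -/
def safeSeqOutcomes : List (List TGD) → Instance → Set Instance
  | [], I => {I}
  | Γ :: rest, I => ⋃ J ∈ safeOutcomes Γ I, safeSeqOutcomes rest J

/-- A boolean conjunctive query: a conjunction of atoms, all variables existential. -/
abbrev BCQ := List Atom

/-- Satisfaction of a boolean conjunctive query. -/
def holdsBCQ (I : Instance) (q : BCQ) : Prop :=
  ∃ ν : Var → Val, ∀ a ∈ q, holdsAtom I ν a

/-- The set of instances represented by a scoped knowledge base `(I, Γ, Scope)`. -/
def repSKB (I : Instance) (Γ : List TGD) (Scope : Set RelName) : Set Instance :=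
  { J | Instance.le I J ∧ (∀ t ∈ Γ, satTGD J t) ∧ ∀ R, R ∉ Scope → I R = J R }

/-- Minimal members of a set of instances. -/
def MinimalIn (S : Set Instance) (J : Instance) : Prop :=
  J ∈ S ∧ ∀ K ∈ S, Instance.le K J → K = J

/-- The set of facts of an instance. -/
def tupleSet (I : Instance) : Set (RelName × List Val) := {p | p.2 ∈ I p.1}


theorem finite_lists (D : Set ℕ) (h : D.Finite) : ∀ n, {l : List ℕ | l.length = n ∧ ∀ x ∈ l, x ∈ D}.Finite := by
  intro n
  induction n with
  | zero =>
    apply Set.Finite.subset (Set.finite_singleton ([] : List ℕ))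
    rintro l ⟨hl, -⟩
    simp [List.length_eq_zero_iff.mp hl]
  | succ n ih =>
    apply Set.Finite.subset (Set.Finite.image2 List.cons h ih)
    rintro l ⟨hl, hmem⟩
    cases l with
    | nil => simp at hl
    | cons x l =>
      exact Set.mem_image2_of_mem (hmem x (by simp)) ⟨by simpa using hl, fun y hy => hmem y (by simp [hy])⟩

def instVals (L : Instance) : Set Val := ⋃ p ∈ tupleSet L, {x | x ∈ p.2}

theorem instVals_finite {L : Instance} (h : FiniteInst L) : (instVals L).Finite :=
  Set.Finite.biUnion h (fun p _ => p.2.finite_toSet)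

def BodySet (t : TGD) (L : Instance) : Set (Var → Val) :=
  {ν | (∀ a ∈ t.body, holdsAtom L ν a) ∧ ∀ v, ¬ t.bodyVar v → ν v = 0}

theorem bodySet_finite (t : TGD) (L : Instance) (h : FiniteInst L) : (BodySet t L).Finite := by
  classical
  set V : List Var := t.body.flatMap Atom.args with hV
  have hbv : ∀ v, t.bodyVar v ↔ v ∈ V := by
    intro v; simp [TGD.bodyVar, hV, List.mem_flatMap]
  have hinj : Set.InjOn (fun ν : Var → Val => V.map ν) (BodySet t L) := by
    rintro ν₁ h₁ ν₂ h₂ he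
    funext v
    by_cases hv : t.bodyVar v
    · exact List.map_inj_left.mp he v ((hbv v).mp hv)
    · rw [h₁.2 v hv, h₂.2 v hv]
  have himg : (fun ν : Var → Val => V.map ν) '' BodySet t L ⊆
      {l : List ℕ | l.length = V.length ∧ ∀ x ∈ l, x ∈ instVals L} := by
    rintro _ ⟨ν, hν, rfl⟩
    refine ⟨by simp, ?_⟩
    intro x hx
    obtain ⟨v, hvV, rfl⟩ := List.mem_map.mp hx
    obtain ⟨a, ha, hva⟩ := (hbv v).mpr hvV
    have hfact : (a.rel, a.args.map ν) ∈ tupleSet L := hν.1 a ha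
    exact Set.mem_biUnion hfact (List.mem_map_of_mem (f := ν) hva)
  exact Set.Finite.of_finite_image ((finite_lists _ (instVals_finite h) V.length).subset himg) hinj

theorem onestep (rank : RelName → ℕ) (t : TGD)
    (hrk : ∀ a ∈ t.body, ∀ b ∈ t.head, rank a.rel < rank b.rel)
    (K L : Instance) (hK : satTGD K t) (hLK : Instance.le L K) (hfin : FiniteInst L) :
    ∃ L1 : Instance, Instance.le L L1 ∧ Instance.le L1 K ∧ FiniteInst L1 ∧ satTGD L1 t ∧
      ∀ R, (∀ b ∈ t.head, b.rel ≠ R) → L1 R = L R := by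
  classical
  have hw : ∀ ν ∈ BodySet t L, ∃ ν' : Var → Val,
      (∀ v, t.bodyVar v → ν' v = ν v) ∧ ∀ b ∈ t.head, holdsAtom K ν' b :=
    fun ν hν => hK ν (fun a ha => hLK a.rel (hν.1 a ha))
  choose! w hw1 hw2 using hw
  set F : Set (RelName × List Val) :=
    ⋃ ν ∈ BodySet t L, {p | ∃ b ∈ t.head, p = (b.rel, b.args.map (w ν))} with hF
  have hFfin : F.Finite := by
    apply Set.Finite.biUnion (bodySet_finite t L hfin)
    intro ν _
    have : {p : RelName × List Val | ∃ b ∈ t.head, p = (b.rel, b.args.map (w ν))} =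
        (fun b : Atom => (b.rel, b.args.map (w ν))) '' {b | b ∈ t.head} := by
      ext p; simp [eq_comm]
    rw [this]
    exact (t.head.finite_toSet).image _
  have hFhead : ∀ p ∈ F, ∃ b ∈ t.head, p.1 = b.rel := by
    rintro p hp
    simp only [hF, Set.mem_iUnion] at hp
    obtain ⟨ν, hν, b, hb, rfl⟩ := hp
    exact ⟨b, hb, rfl⟩
  refine ⟨fun R => L R ∪ {l | (R, l) ∈ F}, fun R => Set.subset_union_left, ?_, ?_, ?_, ?_⟩
  · -- L1 ≤ K
    intro R l hl
    rcases hl with hl | hl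
    · exact hLK R hl
    · simp only [hF, Set.mem_iUnion] at hl
      obtain ⟨ν, hν, b, hb, he⟩ := hl
      have := hw2 ν hν b hb
      rw [Prod.mk.injEq] at he
      rw [he.2, he.1]
      exact this
  · -- finite
    apply Set.Finite.subset (hfin.union hFfin)
    rintro ⟨R, l⟩ hp
    rcases hp with h | h
    · exact Or.inl h
    · exact Or.inr h
  · -- satTGD
    intro ν hbody
    have hbodyL : ∀ a ∈ t.body, holdsAtom L ν a := by
      intro a ha
      rcases hbody a ha with h | h
      · exact h
      · exfalso
        obtain ⟨b, hb, he⟩ := hFhead _ h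
        exact absurd (he ▸ hrk a ha b hb) (lt_irrefl _)
    set ν₀ : Var → Val := fun v => if t.bodyVar v then ν v else 0 with hν₀
    have hν₀mem : ν₀ ∈ BodySet t L := by
      constructor
      · intro a ha
        have : a.args.map ν₀ = a.args.map ν :=
          List.map_inj_left.mpr (fun v hv => if_pos ⟨a, ha, hv⟩)
        rw [holdsAtom, this]
        exact hbodyL a ha
      · intro v hv; exact if_neg hv
    refine ⟨fun v => if t.bodyVar v then ν v else w ν₀ v, fun v hv => if_pos hv, ?_⟩
    intro b hb
    have heq : b.args.map (fun v => if t.bodyVar v then ν v else w ν₀ v) = b.args.map (w ν₀) := by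
      apply List.map_inj_left.mpr
      intro v _
      by_cases hv : t.bodyVar v
      · rw [if_pos hv, hw1 ν₀ hν₀mem v hv]
        show ν v = if t.bodyVar v then ν v else 0
        rw [if_pos hv]
      · rw [if_neg hv]
    rw [holdsAtom, heq]
    refine Or.inr ?_
    simp only [hF, Set.mem_iUnion]
    exact ⟨ν₀, hν₀mem, b, hb, rfl⟩
  · -- unchanged off head rels
    intro R hR
    have : {l | (R, l) ∈ F} = ∅ := by
      ext l
      simp only [Set.mem_setOf_eq, Set.mem_empty_iff_false, iff_false]
      intro h
      obtain ⟨b, hb, he⟩ := hFhead _ h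
      exact hR b hb he.symm
    show L R ∪ {l | (R, l) ∈ F} = L R
    rw [this, Set.union_empty]

/-- minimal head-relation rank of a tgd -/
noncomputable def mhr (rank : RelName → ℕ) (t : TGD) : ℕ := sInf {n | ∃ b ∈ t.head, rank b.rel = n}

theorem chase (rank : RelName → ℕ) (K : Instance) :
    ∀ ts : List TGD,
    List.Pairwise (fun t1 t2 => mhr rank t1 ≤ mhr rank t2) ts →
    (∀ t ∈ ts, satTGD K t) →
    (∀ t ∈ ts, ∀ a ∈ t.body, ∀ b ∈ t.head, rank a.rel < rank b.rel) →
    ∀ L : Instance, Instance.le L K → FiniteInst L →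
    ∃ L', Instance.le L L' ∧ Instance.le L' K ∧ FiniteInst L' ∧ (∀ t ∈ ts, satTGD L' t) ∧
      ∀ R, (∀ t ∈ ts, ∀ b ∈ t.head, b.rel ≠ R) → L' R = L R := by
  intro ts
  induction ts with
  | nil =>
    intro _ _ _ L hLK hfin
    exact ⟨L, fun R => subset_rfl, hLK, hfin, by simp, fun _ _ => rfl⟩
  | cons t rest ih =>
    intro hsorted hKsat hrk L hLK hfin
    obtain ⟨hpt, hprest⟩ := List.pairwise_cons.mp hsorted
    obtain ⟨L1, hLL1, hL1K, hL1fin, hL1sat, hL1eq⟩ :=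
      onestep rank t (hrk t (by simp)) K L (hKsat t (by simp)) hLK hfin
    obtain ⟨L2, hL12, hL2K, hL2fin, hL2sat, hL2eq⟩ :=
      ih hprest (fun t' ht' => hKsat t' (by simp [ht'])) (fun t' ht' => hrk t' (by simp [ht']))
        L1 hL1K hL1fin
    have hsatT : satTGD L2 t := by
      by_cases hhead : t.head = []
      · intro ν _
        exact ⟨ν, fun v _ => rfl, by simp [hhead]⟩
      · obtain ⟨b0, hb0⟩ := List.exists_mem_of_ne_nil t.head hhead
        have hne : {n | ∃ b ∈ t.head, rank b.rel = n}.Nonempty := ⟨rank b0.rel, b0, hb0, rfl⟩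
        obtain ⟨bm, hbm, hbmr⟩ := Nat.sInf_mem hne
        have hbodysame : ∀ a ∈ t.body, L2 a.rel = L1 a.rel := by
          intro a ha
          apply hL2eq
          intro t' ht' b hb
          intro hbe
          have h1 : mhr rank t' ≤ rank b.rel := Nat.sInf_le ⟨b, hb, rfl⟩
          have h2 : rank a.rel < mhr rank t := by
            have := hrk t (by simp) a ha bm hbm
            rw [mhr, ← hbmr]
            exact this
          have h3 : mhr rank t ≤ mhr rank t' := hpt t' ht'
          rw [hbe] at h1
          omega
        intro ν hbody
        have hbody1 : ∀ a ∈ t.body, holdsAtom L1 ν a := by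
          intro a ha
          have := hbody a ha
          rwa [holdsAtom, ← hbodysame a ha]
        obtain ⟨ν', hag, hhd⟩ := hL1sat ν hbody1
        exact ⟨ν', hag, fun b hb => hL12 b.rel (hhd b hb)⟩
    refine ⟨L2, fun R => (hLL1 R).trans (hL12 R), hL2K, hL2fin, ?_, ?_⟩
    · intro t' ht'
      rcases List.mem_cons.mp ht' with rfl | ht'
      · exact hsatT
      · exact hL2sat t' ht'
    · intro R hR
      rw [hL2eq R (fun t' ht' => hR t' (by simp [ht'])), hL1eq R (hR t (by simp))]

theorem exists_minimal_le (S : Set Instance) (L : Instance) (hL : L ∈ S) (hfin : FiniteInst L) :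
    ∃ M, (M ∈ S ∧ ∀ K ∈ S, Instance.le K M → K = M) ∧ Instance.le M L := by
  have hts : ∀ {A B : Instance}, Instance.le A B → tupleSet A ⊆ tupleSet B :=
    fun h p hp => h p.1 hp
  set T : Set ℕ := {n | ∃ M, M ∈ S ∧ Instance.le M L ∧ (tupleSet M).ncard = n} with hT
  have hTne : T.Nonempty := ⟨(tupleSet L).ncard, L, hL, fun R => subset_rfl, rfl⟩
  obtain ⟨M, hMS, hML, hMcard⟩ := Nat.sInf_mem hTne
  have hMfin : (tupleSet M).Finite := hfin.subset (hts hML)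
  refine ⟨M, ⟨hMS, ?_⟩, hML⟩
  intro N hNS hNM
  have hNL : Instance.le N L := fun R => (hNM R).trans (hML R)
  have h1 : sInf T ≤ (tupleSet N).ncard := Nat.sInf_le ⟨N, hNS, hNL, rfl⟩
  have h2 : (tupleSet N).ncard ≤ (tupleSet M).ncard := Set.ncard_le_ncard (hts hNM) hMfin
  have heq : tupleSet N = tupleSet M :=
    Set.eq_of_subset_of_ncard_le (hts hNM) (by omega) hMfin
  funext R
  ext l
  constructor
  · intro h; exact Set.ext_iff.mp heq (R, l) |>.mp h
  · intro h; exact Set.ext_iff.mp heq (R, l) |>.mpr h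

/-- For a procedure with safe scope (acyclic tgd postconditions `Γ`) and
instances `I* ⊆ I`, every instance in `outcomes_P(I)` extends some minimal
instance of `outcomes_P(I*)`.  (The proviso that every assignment firing a tgd
body over `I*` also fires over `I` holds automatically since `I* ⊆ I`.) -/
theorem outcomes_extend_minimal_of_subinstance
    (Γ : List TGD) (hacyc : AcyclicTGDs Γ)
    (Istar I : Instance) (hle : Instance.le Istar I) (hfin : FiniteInst I)
    (J : Instance) (hJ : J ∈ safeOutcomes Γ I) :
    ∃ M, MinimalIn (safeOutcomes Γ Istar) M ∧ Instance.le M J := by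
  classical
  obtain ⟨rank, hrank⟩ := hacyc
  obtain ⟨hIJ, hJsat, hJout⟩ := hJ
  set K : Instance := fun R => if R ∈ headRels Γ then J R else Istar R with hKdef
  have hKJ : Instance.le K J := by
    intro R l hl
    simp only [hKdef] at hl
    split at hl
    · exact hl
    · exact hIJ R (hle R hl)
  have hIK : Instance.le Istar K := by
    intro R l hl
    simp only [hKdef]
    split
    · exact hIJ R (hle R hl)
    · exact hl
  have hKsat : ∀ t ∈ Γ, satTGD K t := by
    intro t ht ν hb
    obtain ⟨ν', hag, hhd⟩ := hJsat t ht ν (fun a ha => hKJ a.rel (hb a ha))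
    refine ⟨ν', hag, fun b hbm => ?_⟩
    have hhr : b.rel ∈ headRels Γ := ⟨t, ht, b, hbm, rfl⟩
    show b.args.map ν' ∈ K b.rel
    simp only [hKdef, if_pos hhr]
    exact hhd b hbm
  set ts := Γ.mergeSort (fun a b => decide (mhr rank a ≤ mhr rank b)) with hts
  have hperm := List.mergeSort_perm Γ (fun a b => decide (mhr rank a ≤ mhr rank b))
  have hmem : ∀ t, t ∈ ts ↔ t ∈ Γ := fun t => hperm.mem_iff
  have hsorted : List.Pairwise (fun t1 t2 => mhr rank t1 ≤ mhr rank t2) ts := by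
    have h := List.pairwise_mergeSort (le := fun a b => decide (mhr rank a ≤ mhr rank b))
      (fun a b c hab hbc => by simp_all; omega)
      (fun a b => by simp [le_total]) Γ
    exact h.imp (fun hx => by simpa using hx)
  have hIstarFin : FiniteInst Istar := hfin.subset (fun p hp => hle p.1 hp)
  obtain ⟨Lf, hILf, hLfK, hLffin, hLfsat, hLfeq⟩ :=
    chase rank K ts hsorted (fun t ht => hKsat t ((hmem t).mp ht))
      (fun t ht => hrank t ((hmem t).mp ht)) Istar hIK hIstarFin
  have hLfout : Lf ∈ safeOutcomes Γ Istar := by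
    refine ⟨hILf, fun t ht => hLfsat t ((hmem t).mpr ht), ?_⟩
    intro R hR
    exact (hLfeq R (fun t ht b hb hbe => hR ⟨t, (hmem t).mp ht, b, hb, hbe⟩)).symm
  obtain ⟨M, hMmin, hMLf⟩ := exists_minimal_le (safeOutcomes Γ Istar) Lf hLfout hLffin
  exact ⟨M, hMmin, fun R => ((hMLf R).trans (hLfK R)).trans (hKJ R)⟩
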